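/- Let a be a real number and define, for real parameters t and u, x(t,u) = u(t^2 − a^2) and y(t,u) = u t (t^2 − a^2). Then y^2 − x^2 (x + a^2) = u^2 (t^2 − a^2)^3 (1 − u), the Jacobian determinant ∂x/∂t · ∂y/∂u − ∂x/∂u · ∂y/∂t equals −u(t^2 − a^2)^2, and consequently, whenever t^2 ≠ a^2, u ≠ 0 and u ≠ 1, (∂x/∂t · ∂y/∂u − ∂x/∂u · ∂y/∂t) / (y^2 − x^2(x + a^2)) = −1/((t^2 − a^2) u (1 − u)) = 1/((a − t)(a + t) u (1 − u)). -/

import Mathlib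

lemma d1 (a u t : ℝ) : deriv (fun s : ℝ => u * (s ^ 2 - a ^ 2)) t = u * (2 * t) := by
  have h : HasDerivAt (fun s : ℝ => u * (s ^ 2 - a ^ 2)) (u * (2 * t)) t := by
    have := ((hasDerivAt_pow 2 t).sub_const (a ^ 2)).const_mul u
    simpa using this
  exact h.deriv

lemma d2 (a u t : ℝ) : deriv (fun v : ℝ => v * t * (t ^ 2 - a ^ 2)) u = t * (t ^ 2 - a ^ 2) := by
  have h : HasDerivAt (fun v : ℝ => v * t * (t ^ 2 - a ^ 2)) (t * (t ^ 2 - a ^ 2)) u := by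
    have := (hasDerivAt_id u).mul_const (t * (t ^ 2 - a ^ 2))
    simpa [mul_assoc] using this
  exact h.deriv

lemma d3 (a u t : ℝ) : deriv (fun v : ℝ => v * (t ^ 2 - a ^ 2)) u = (t ^ 2 - a ^ 2) := by
  have h := (hasDerivAt_id u).mul_const (t ^ 2 - a ^ 2)
  simpa using h.deriv

lemma d4 (a u t : ℝ) : deriv (fun s : ℝ => u * s * (s ^ 2 - a ^ 2)) t = u * (3 * t ^ 2 - a ^ 2) := by
  have h : HasDerivAt (fun s : ℝ => u * s * (s ^ 2 - a ^ 2)) (u * (3 * t ^ 2 - a ^ 2)) t := by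
    have h1 : HasDerivAt (fun s : ℝ => u * s) u t := by
      simpa using (hasDerivAt_id t).const_mul u
    have h2 : HasDerivAt (fun s : ℝ => s ^ 2 - a ^ 2) (2 * t) t := by
      simpa using (hasDerivAt_pow 2 t).sub_const (a ^ 2)
    have : HasDerivAt (fun s : ℝ => u * s * (s ^ 2 - a ^ 2)) (u * (t ^ 2 - a ^ 2) + u * t * (2 * t)) t := h1.mul h2
    convert this using 1
    ring
  exact h.deriv

/-- **The teardrop of the nodal cubic as a non-normal positive geometry.**
With `x(t,u) = u(t² - a²)` and `y(t,u) = u t (t² - a²)`: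
(1) `y² - x²(x + a²) = u²(t² - a²)³(1 - u)`;
(2) the Jacobian `∂x/∂t ∂y/∂u - ∂x/∂u ∂y/∂t = -u(t² - a²)²`;
(3) whenever `t² ≠ a²`, `u ≠ 0`, `u ≠ 1`, the ratio (Jacobian)/(y² - x²(x + a²)) equals
`-1/((t² - a²)u(1 - u)) = 1/((a - t)(a + t)u(1 - u))`. -/
theorem stmt_19 (a : ℝ) :
    (∀ t u : ℝ,
      (u * t * (t ^ 2 - a ^ 2)) ^ 2 -
          (u * (t ^ 2 - a ^ 2)) ^ 2 * (u * (t ^ 2 - a ^ 2) + a ^ 2) =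
        u ^ 2 * (t ^ 2 - a ^ 2) ^ 3 * (1 - u)) ∧
    (∀ t u : ℝ,
      deriv (fun s : ℝ => u * (s ^ 2 - a ^ 2)) t *
          deriv (fun v : ℝ => v * t * (t ^ 2 - a ^ 2)) u -
        deriv (fun v : ℝ => v * (t ^ 2 - a ^ 2)) u *
          deriv (fun s : ℝ => u * s * (s ^ 2 - a ^ 2)) t =
      -(u * (t ^ 2 - a ^ 2) ^ 2)) ∧
    (∀ t u : ℝ, t ^ 2 ≠ a ^ 2 → u ≠ 0 → u ≠ 1 →
      (deriv (fun s : ℝ => u * (s ^ 2 - a ^ 2)) t *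
            deriv (fun v : ℝ => v * t * (t ^ 2 - a ^ 2)) u -
          deriv (fun v : ℝ => v * (t ^ 2 - a ^ 2)) u *
            deriv (fun s : ℝ => u * s * (s ^ 2 - a ^ 2)) t) /
          ((u * t * (t ^ 2 - a ^ 2)) ^ 2 -
            (u * (t ^ 2 - a ^ 2)) ^ 2 * (u * (t ^ 2 - a ^ 2) + a ^ 2)) =
        -(1 / ((t ^ 2 - a ^ 2) * u * (1 - u))) ∧
      (deriv (fun s : ℝ => u * (s ^ 2 - a ^ 2)) t *
            deriv (fun v : ℝ => v * t * (t ^ 2 - a ^ 2)) u -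
          deriv (fun v : ℝ => v * (t ^ 2 - a ^ 2)) u *
            deriv (fun s : ℝ => u * s * (s ^ 2 - a ^ 2)) t) /
          ((u * t * (t ^ 2 - a ^ 2)) ^ 2 -
            (u * (t ^ 2 - a ^ 2)) ^ 2 * (u * (t ^ 2 - a ^ 2) + a ^ 2)) =
        1 / ((a - t) * (a + t) * u * (1 - u))) := by
  refine ⟨fun t u => by ring, fun t u => by rw [d1, d2, d3, d4]; ring, fun t u ht hu hu1 => ?_⟩
  have h0 : t ^ 2 - a ^ 2 ≠ 0 := sub_ne_zero.mpr ht
  have h1 : (1 : ℝ) - u ≠ 0 := sub_ne_zero.mpr (Ne.symm hu1)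
  have h2 : a - t ≠ 0 := fun h => h0 (by rw [sub_eq_zero.mp h]; ring)
  have h3 : a + t ≠ 0 := fun h => h0 (by rw [eq_neg_of_add_eq_zero_left h]; ring)
  rw [d1, d2, d3, d4]
  have hden : (u * t * (t ^ 2 - a ^ 2)) ^ 2 -
      (u * (t ^ 2 - a ^ 2)) ^ 2 * (u * (t ^ 2 - a ^ 2) + a ^ 2) =
      u ^ 2 * (t ^ 2 - a ^ 2) ^ 3 * (1 - u) := by ring
  have hnum : u * (2 * t) * (t * (t ^ 2 - a ^ 2)) - (t ^ 2 - a ^ 2) * (u * (3 * t ^ 2 - a ^ 2)) =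
      -(u * (t ^ 2 - a ^ 2) ^ 2) := by ring
  rw [hden, hnum]
  constructor
  · field_simp
  · rw [div_eq_div_iff (by positivity) ?_]
    · field_simp
      ring
    · intro h
      rcases mul_eq_zero.mp h with h | h
      · rcases mul_eq_zero.mp h with h | h
        · exact (mul_ne_zero h2 h3) h
        · exact hu h
      · exact h1 h
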